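/- Let n ≥ 2 and let f : ℝ≥0 → ℝ ∪ {−∞} be a strictly increasing function that satisfies Condition 6b. Then for every positive-admitting integer-valued instance with n agents, every allocation chosen by the additive welfarist rule with f is EF1. -/
import Mathlib


open scoped BigOperators

noncomputable section

namespace FairDiv

/-- The bundle of goods received by agent `i` under the assignment `A` of goods to agents. -/
def bundle {n m : ℕ} (A : Fin m → Fin n) (i : Fin n) : Finset (Fin m) :=
  Finset.univ.filter fun g => A g = i

/-- Additive utility of agent `i` for a set `S` of goods. -/
def util {n m : ℕ} (u : Fin n → Fin m → ℝ) (i : Fin n) (S : Finset (Fin m)) : ℝ :=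
  ∑ g ∈ S, u i g

/-- Envy-freeness up to one good. -/
def EF1 {n m : ℕ} (u : Fin n → Fin m → ℝ) (A : Fin m → Fin n) : Prop :=
  ∀ i j : Fin n, bundle A j ≠ ∅ →
    ∃ g ∈ bundle A j, util u i ((bundle A j).erase g) ≤ util u i (bundle A i)

/-- Welfare of an allocation under the additive welfarist rule with function `f`. -/
def welfare {n m : ℕ} (f : ℝ → EReal) (u : Fin n → Fin m → ℝ) (A : Fin m → Fin n) : EReal :=
  ∑ i : Fin n, f (util u i (bundle A i))

/-- An allocation is chosen by the additive welfarist rule with `f` if it maximizes welfare. -/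
def Chosen {n m : ℕ} (f : ℝ → EReal) (u : Fin n → Fin m → ℝ) (A : Fin m → Fin n) : Prop :=
  ∀ B : Fin m → Fin n, welfare f u B ≤ welfare f u A

/-- An instance is positive-admitting if some allocation gives everyone positive utility. -/
def PositiveAdmitting {n m : ℕ} (u : Fin n → Fin m → ℝ) : Prop :=
  ∃ B : Fin m → Fin n, ∀ i : Fin n, 0 < util u i (bundle B i)

def IdenticalGood {n m : ℕ} (u : Fin n → Fin m → ℝ) : Prop :=
  ∀ i : Fin n, ∃ a : ℝ, 0 < a ∧ ∀ g : Fin m, u i g = a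

def TwoValue {n m : ℕ} (u : Fin n → Fin m → ℝ) : Prop :=
  ∃ a₁ a₂ : ℝ, a₁ ≠ a₂ ∧ 0 ≤ a₁ ∧ 0 ≤ a₂ ∧ ∀ i g, u i g = a₁ ∨ u i g = a₂

def Normalized {n m : ℕ} (u : Fin n → Fin m → ℝ) : Prop :=
  ∀ i j : Fin n, util u i Finset.univ = util u j Finset.univ

def IntegerValued {n m : ℕ} (u : Fin n → Fin m → ℝ) : Prop :=
  ∀ i g, ∃ z : ℕ, u i g = (z : ℝ)

def Binary {n m : ℕ} (u : Fin n → Fin m → ℝ) : Prop :=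
  ∀ i g, u i g = 0 ∨ u i g = 1

/-- `Δ_{f,k}(x) = f((k+1)x) − f(kx)`, valued in `EReal` (it is `+∞` iff `f(kx) = −∞`). -/
def Delta (f : ℝ → EReal) (k : ℕ) (x : ℝ) : EReal :=
  f (((k : ℝ) + 1) * x) - f ((k : ℝ) * x)

/-- Condition 1: `Δ_{f,k}(b) > Δ_{f,k+1}(a)` for all `k ∈ ℤ≥0` and `a, b ∈ ℝ>0`. -/
def Cond1 (f : ℝ → EReal) : Prop :=
  ∀ k : ℕ, ∀ a b : ℝ, 0 < a → 0 < b → Delta f (k + 1) a < Delta f k b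

/-- Condition 1a: `Δ_{f,k}` is constant on `ℝ>0` for every `k ∈ ℤ>0`. -/
def Cond1a (f : ℝ → EReal) : Prop :=
  ∀ k : ℕ, 0 < k → ∀ x y : ℝ, 0 < x → 0 < y → Delta f k x = Delta f k y

/-- Condition 2. -/
def Cond2 (f : ℝ → EReal) : Prop :=
  ∀ a b c d : ℝ, 0 ≤ a → 0 ≤ b → 0 ≤ c → 0 ≤ d →
    min a b ≤ min c d → a * b < c * d → f a + f b < f c + f d

/-- Condition 3: `Δ_{f,k}(b) > Δ_{f,k+1}(a)` for all `k ∈ ℤ≥0` and `a, b ∈ ℤ>0`. -/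
def Cond3 (f : ℝ → EReal) : Prop :=
  ∀ k : ℕ, ∀ a b : ℕ, 0 < a → 0 < b → Delta f (k + 1) (a : ℝ) < Delta f k (b : ℝ)

/-- Condition 3a. -/
def Cond3a (f : ℝ → EReal) : Prop :=
  ∀ k l : ℕ, l < k → ∀ a b : ℕ, 0 < a → 0 < b → Delta f k (a : ℝ) < Delta f l (b : ℝ)

/-- Condition 3b: `Δ_{f,k}(1) > Δ_{f,k+1}(a) > Δ_{f,k+2}(1)` for `k ∈ ℤ≥0`, `a ∈ ℤ>0`. -/
def Cond3b (f : ℝ → EReal) : Prop :=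
  ∀ k : ℕ, ∀ a : ℕ, 0 < a →
    Delta f (k + 1) (a : ℝ) < Delta f k 1 ∧ Delta f (k + 2) 1 < Delta f (k + 1) (a : ℝ)

/-- Condition 4: `Δ_{f,k}(1) > Δ_{f,k+1}(1)` for all `k ∈ ℤ≥0`. -/
def Cond4 (f : ℝ → EReal) : Prop :=
  ∀ k : ℕ, Delta f (k + 1) 1 < Delta f k 1

/-- Condition 5. -/
def Cond5 (f : ℝ → EReal) : Prop :=
  ∀ a b k l r : ℕ, 0 < a → 0 < b → b ≤ a → l * b + r * a < (k + 1) * b →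
    Delta f (k + 1) (a : ℝ) <
        f (((l : ℝ) + 1) * (b : ℝ) + (r : ℝ) * (a : ℝ)) - f ((l : ℝ) * (b : ℝ) + (r : ℝ) * (a : ℝ))
      ∧ Delta f (k + 2) 1 < Delta f (k + 1) (a : ℝ)

/-- Condition 6a: `f((k+1)b−1) − f(kb−1) > Δ_{f,k}(a)` for all `k, a, b ∈ ℤ>0`. -/
def Cond6a (f : ℝ → EReal) : Prop :=
  ∀ k a b : ℕ, 0 < k → 0 < a → 0 < b →
    Delta f k (a : ℝ) < f (((k : ℝ) + 1) * (b : ℝ) - 1) - f ((k : ℝ) * (b : ℝ) - 1)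

/-- Condition 6b: `f(y+b) − f(y) > f(x+a) − f(x)` whenever `x/a ≥ (y+1)/b`. -/
def Cond6b (f : ℝ → EReal) : Prop :=
  ∀ a b : ℕ, ∀ x y : ℕ, 0 < a → 0 < b → ((y : ℝ) + 1) / (b : ℝ) ≤ (x : ℝ) / (a : ℝ) →
    f ((x : ℝ) + (a : ℝ)) - f (x : ℝ) < f ((y : ℝ) + (b : ℝ)) - f (y : ℝ)

/-- Modified logarithmic function `λ_c(x) = log (x + c)`, with `log 0 = −∞`. -/
def lam (c : ℝ) (x : ℝ) : EReal :=
  if x + c = 0 then ⊥ else ((Real.log (x + c) : ℝ) : EReal)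

/-- The `p`-mean function `φ_p`, with `φ_p(0) = −∞` for `p ≤ 0`. -/
def phi (p : ℝ) (x : ℝ) : EReal :=
  if 0 < p then ((x ^ p : ℝ) : EReal)
  else if x = 0 then ⊥
  else if p = 0 then ((Real.log x : ℝ) : EReal)
  else ((-(x ^ p) : ℝ) : EReal)

/-- Modified harmonic number `h_c` on nonnegative integers. -/
def hmod (c : ℝ) (x : ℕ) : EReal :=
  if c = -1 then
    (if x = 0 then (⊥ : EReal)
     else (((∑ t ∈ Finset.range (x - 1), (1 : ℝ) / ((t : ℝ) + 1)) : ℝ) : EReal))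
  else (((∑ t ∈ Finset.range x, (1 : ℝ) / ((t : ℝ) + 1 + c)) : ℝ) : EReal)

/-- Condition 3b for a function defined on nonnegative integers. -/
def Cond3bNat (f : ℕ → EReal) : Prop :=
  ∀ k : ℕ, ∀ a : ℕ, 0 < a →
    f ((k + 2) * a) - f ((k + 1) * a) < f (k + 1) - f k
    ∧ f (k + 3) - f (k + 2) < f ((k + 2) * a) - f ((k + 1) * a)

private lemma coe_finset_sum' {α : Type*} (s : Finset α) (g : α → ℝ) :
    ((∑ x ∈ s, g x : ℝ) : EReal) = ∑ x ∈ s, ((g x : ℝ) : EReal) := by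
  classical
  induction s using Finset.cons_induction with
  | empty => simp
  | cons a s ha ih => rw [Finset.sum_cons, Finset.sum_cons, ← ih, EReal.coe_add]

private lemma util_nonneg' {n m : ℕ} (u : Fin n → Fin m → ℝ) (hu : ∀ i g, 0 ≤ u i g)
    (i : Fin n) (S : Finset (Fin m)) : 0 ≤ util u i S :=
  Finset.sum_nonneg fun g _ => hu i g

theorem integer_general_sufficient (n : ℕ) (hn : 2 ≤ n) (f : ℝ → EReal)
    (hfmono : StrictMonoOn f (Set.Ici (0 : ℝ)))
    (hftop : ∀ x : ℝ, 0 ≤ x → f x ≠ ⊤)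
    (hcond : Cond6b f) :
    (∀ m : ℕ, ∀ u : Fin n → Fin m → ℝ, (∀ i g, 0 ≤ u i g) →
        IntegerValued u → PositiveAdmitting u →
        ∀ A : Fin m → Fin n, Chosen f u A → EF1 u A) := by
  classical
  intro m u hu hint hpos A hA
  choose v hv using hint
  intro i j hj
  rw [← Finset.nonempty_iff_ne_empty] at hj
  by_contra hc
  push_neg at hc
  -- hc : ∀ g ∈ bundle A j, util u i (bundle A i) < util u i ((bundle A j).erase g)
  have hij : i ≠ j := by
    rintro rfl
    obtain ⟨g0, hg0⟩ := hj
    have h1 := hc g0 hg0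
    have h2 : util u i ((bundle A i).erase g0) ≤ util u i (bundle A i) :=
      Finset.sum_le_sum_of_subset_of_nonneg (Finset.erase_subset _ _)
        (fun x _ _ => hu i x)
    exact absurd (h1.trans_le h2) (lt_irrefl _)
  have hutil : ∀ (k : Fin n) (S : Finset (Fin m)),
      util u k S = ((∑ h ∈ S, v k h : ℕ) : ℝ) := by
    intro k S
    rw [util, Nat.cast_sum]
    exact Finset.sum_congr rfl fun h _ => hv k h
  -- positivity of i's value of j's bundle
  obtain ⟨g0, hg0⟩ := hj
  have hposAj : 0 < util u i (bundle A j) := by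
    have h1 := hc g0 hg0
    have h2 : util u i ((bundle A j).erase g0) ≤ util u i (bundle A j) :=
      Finset.sum_le_sum_of_subset_of_nonneg (Finset.erase_subset _ _)
        (fun x _ _ => hu i x)
    have := util_nonneg' u hu i (bundle A i)
    linarith
  -- the set of goods in j's bundle valued positively by i
  set S : Finset (Fin m) := (bundle A j).filter (fun h => 0 < v i h) with hSdef
  have hSne : S.Nonempty := by
    by_contra hS
    rw [Finset.not_nonempty_iff_eq_empty, Finset.filter_eq_empty_iff] at hS
    have : util u i (bundle A j) = 0 := by
      rw [util]
      refine Finset.sum_eq_zero fun h hh => ?_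
      rw [hv i h]
      have h0 : v i h = 0 := by
        have := hS hh
        omega
      rw [h0]; simp
    linarith
  obtain ⟨g, hgS, hgmin⟩ := Finset.exists_min_image S (fun h => (v j h : ℝ) / (v i h)) hSne
  have hg : g ∈ bundle A j := (Finset.mem_filter.mp hgS).1
  have hb : 0 < v i g := (Finset.mem_filter.mp hgS).2
  set a : ℕ := v j g with hadef
  set b : ℕ := v i g with hbdef
  set y : ℕ := ∑ h ∈ bundle A i, v i h with hydef
  set X : ℕ := ∑ h ∈ (bundle A j).erase g, v j h with hXdef
  set Y : ℕ := ∑ h ∈ (bundle A j).erase g, v i h with hYdef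
  -- y + 1 ≤ Y
  have hyY : y + 1 ≤ Y := by
    have h1 := hc g hg
    rw [hutil i (bundle A i), hutil i ((bundle A j).erase g)] at h1
    exact_mod_cast h1
  -- cross inequality
  have hcross : ∀ h ∈ (bundle A j).erase g, a * v i h ≤ b * v j h := by
    intro h hh
    have hhb : h ∈ bundle A j := Finset.mem_of_mem_erase hh
    rcases Nat.eq_zero_or_pos (v i h) with h0 | hpos'
    · simp [h0]
    · have hhS : h ∈ S := Finset.mem_filter.mpr ⟨hhb, hpos'⟩
      have := hgmin h hhS
      rw [div_le_div_iff₀ (by exact_mod_cast hb) (by exact_mod_cast hpos')] at this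
      have : (a : ℝ) * (v i h : ℝ) ≤ (b : ℝ) * (v j h : ℝ) := by
        push_cast at this ⊢; nlinarith
      exact_mod_cast this
  have hkey : a * (y + 1) ≤ b * X := by
    have h1 : a * Y ≤ b * X := by
      rw [hYdef, hXdef, Finset.mul_sum, Finset.mul_sum]
      exact Finset.sum_le_sum hcross
    calc a * (y + 1) ≤ a * Y := Nat.mul_le_mul_left a hyY
      _ ≤ b * X := h1
  -- the modified allocation
  set B : Fin m → Fin n := Function.update A g i with hBdef
  have hAg : A g = j := by
    have := hg
    simp only [bundle, Finset.mem_filter] at this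
    exact this.2
  have hgAi : g ∉ bundle A i := by
    simp [bundle, hAg, Ne.symm hij]
  have hBi : bundle B i = insert g (bundle A i) := by
    ext h
    by_cases hhg : h = g
    · subst hhg; simp [bundle, hBdef]
    · simp [bundle, hBdef, Function.update_of_ne hhg, hhg]
  have hBj : bundle B j = (bundle A j).erase g := by
    ext h
    by_cases hhg : h = g
    · subst hhg; simp [bundle, hBdef, hij]
    · simp [bundle, hBdef, Function.update_of_ne hhg, hhg]
  have hBk : ∀ k, k ≠ i → k ≠ j → bundle B k = bundle A k := by
    intro k hki hkj
    ext h
    by_cases hhg : h = g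
    · subst hhg
      simp [bundle, hBdef, hAg, Ne.symm hki, Ne.symm hkj]
    · simp [bundle, hBdef, Function.update_of_ne hhg]
  -- finiteness of welfare terms of A
  obtain ⟨B0, hB0⟩ := hpos
  have hWB0 : welfare f u B0 = ((∑ k, (f (util u k (bundle B0 k))).toReal : ℝ) : EReal) := by
    rw [welfare, coe_finset_sum']
    refine Finset.sum_congr rfl fun k _ => ?_
    refine (EReal.coe_toReal (hftop _ (le_of_lt (hB0 k))) ?_).symm
    have h1 : f 0 < f (util u k (bundle B0 k)) :=
      hfmono (Set.mem_Ici.mpr le_rfl) (Set.mem_Ici.mpr (le_of_lt (hB0 k))) (hB0 k)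
    exact (bot_le.trans_lt h1).ne'
  have hWA_ne : welfare f u A ≠ ⊥ := by
    intro hbot
    have h1 := hA B0
    rw [hbot, hWB0] at h1
    exact absurd h1 (not_le.mpr (EReal.bot_lt_coe _))
  have hne_bot : ∀ k, f (util u k (bundle A k)) ≠ ⊥ := by
    intro k hk
    apply hWA_ne
    rw [welfare, ← Finset.add_sum_erase _ _ (Finset.mem_univ k), hk, EReal.bot_add]
  set r : Fin n → ℝ := fun k => (f (util u k (bundle A k))).toReal with hrdef
  have hreal : ∀ k, f (util u k (bundle A k)) = ((r k : ℝ) : EReal) := fun k =>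
    (EReal.coe_toReal (hftop _ (util_nonneg' u hu k _)) (hne_bot k)).symm
  -- value of i's new bundle
  have hutilBi : util u i (bundle B i) = ((y + b : ℕ) : ℝ) := by
    rw [hBi, hutil]
    congr 1
    rw [Finset.sum_insert hgAi]
    omega
  have hfy : f ((y : ℕ) : ℝ) = ((r i : ℝ) : EReal) := by
    rw [← hutil, ← hreal i]
  have hRi_ne : f (((y + b : ℕ) : ℝ)) ≠ ⊥ := by
    have h1 : f ((y : ℕ) : ℝ) < f (((y + b : ℕ) : ℝ)) := by
      apply hfmono (Set.mem_Ici.mpr (by positivity)) (Set.mem_Ici.mpr (by positivity))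
      exact_mod_cast Nat.lt_add_of_pos_right hb
    rw [hfy] at h1
    exact ((EReal.bot_lt_coe _).trans h1).ne'
  set Ri : ℝ := (f (((y + b : ℕ) : ℝ))).toReal with hRidef
  have hRi : f (((y + b : ℕ) : ℝ)) = ((Ri : ℝ) : EReal) :=
    (EReal.coe_toReal (hftop _ (by positivity)) hRi_ne).symm
  -- value of j's new bundle
  have hZ : ∑ h ∈ bundle A j, v j h = a + X := by
    rw [hXdef, hadef, Finset.add_sum_erase _ _ hg]
  have hutilAj2 : util u j (bundle A j) = ((a + X : ℕ) : ℝ) := by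
    rw [hutil, hZ]
  have hfaX : f (((a + X : ℕ) : ℝ)) = ((r j : ℝ) : EReal) := by
    rw [← hutilAj2, ← hreal j]
  have hRj_ne : f ((X : ℕ) : ℝ) ≠ ⊥ := by
    rcases Nat.eq_zero_or_pos a with ha0 | hapos
    · have hXX : ((X : ℕ) : ℝ) = ((a + X : ℕ) : ℝ) := by rw [ha0]; push_cast; ring
      rw [hXX, hfaX]
      exact EReal.coe_ne_bot _
    · have hX1 : 0 < X := by
        rcases Nat.eq_zero_or_pos X with h0 | h
        · rw [h0, Nat.mul_zero, Nat.le_zero, Nat.mul_eq_zero] at hkey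
          omega
        · exact h
      have h1 : f 0 < f ((X : ℕ) : ℝ) :=
        hfmono (Set.mem_Ici.mpr le_rfl) (Set.mem_Ici.mpr (by positivity))
          (by exact_mod_cast hX1)
      exact (bot_le.trans_lt h1).ne'
  set Rj : ℝ := (f ((X : ℕ) : ℝ)).toReal with hRjdef
  have hRj : f ((X : ℕ) : ℝ) = ((Rj : ℝ) : EReal) :=
    (EReal.coe_toReal (hftop _ (by positivity)) hRj_ne).symm
  -- the chosen inequality in the reals
  have hmain : Ri + Rj ≤ r i + r j := by
    have h1 := hA B
    have hji : j ∈ (Finset.univ : Finset (Fin n)).erase i :=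
      Finset.mem_erase.mpr ⟨Ne.symm hij, Finset.mem_univ j⟩
    have hsplit : ∀ (F : Fin n → EReal),
        ∑ k, F k = F i + (F j + ∑ k ∈ ((Finset.univ : Finset (Fin n)).erase i).erase j, F k) := by
      intro F
      rw [← Finset.add_sum_erase _ _ (Finset.mem_univ i), ← Finset.add_sum_erase _ _ hji]
    rw [welfare, welfare, hsplit, hsplit] at h1
    have hrest : ∀ k ∈ ((Finset.univ : Finset (Fin n)).erase i).erase j,
        f (util u k (bundle B k)) = ((r k : ℝ) : EReal) := by
      intro k hk
      have hkj : k ≠ j := (Finset.mem_erase.mp hk).1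
      have hki : k ≠ i := (Finset.mem_erase.mp (Finset.mem_erase.mp hk).2).1
      rw [hBk k hki hkj, hreal k]
    rw [Finset.sum_congr rfl hrest, Finset.sum_congr rfl (fun k _ => hreal k)] at h1
    rw [hutilBi, hRi, hBj, hutil, hRj, hreal i, hreal j] at h1
    rw [← coe_finset_sum', ← EReal.coe_add, ← EReal.coe_add, ← EReal.coe_add, ← EReal.coe_add] at h1
    rw [EReal.coe_le_coe_iff] at h1
    linarith
  -- final contradiction
  rcases Nat.eq_zero_or_pos a with ha0 | hapos
  · have hXX : ((X : ℕ) : ℝ) = ((a + X : ℕ) : ℝ) := by rw [ha0]; push_cast; ring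
    have hRjrj : Rj = r j := by
      have := hRj
      rw [hXX, hfaX] at this
      exact_mod_cast this.symm
    have h1 : f ((y : ℕ) : ℝ) < f (((y + b : ℕ) : ℝ)) := by
      apply hfmono (Set.mem_Ici.mpr (by positivity)) (Set.mem_Ici.mpr (by positivity))
      exact_mod_cast Nat.lt_add_of_pos_right hb
    rw [hfy, hRi, EReal.coe_lt_coe_iff] at h1
    linarith
  · have hdiv : ((y : ℝ) + 1) / (b : ℝ) ≤ (X : ℝ) / (a : ℝ) := by
      rw [div_le_div_iff₀ (by exact_mod_cast hb) (by exact_mod_cast hapos)]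
      have : ((a * (y + 1) : ℕ) : ℝ) ≤ ((b * X : ℕ) : ℝ) := by exact_mod_cast hkey
      push_cast at this
      nlinarith
    have h1 := hcond a b X y hapos hb hdiv
    have hc1 : ((X : ℝ) + (a : ℝ)) = ((a + X : ℕ) : ℝ) := by push_cast; ring
    have hc2 : ((y : ℝ) + (b : ℝ)) = ((y + b : ℕ) : ℝ) := by push_cast; ring
    rw [hc1, hc2, hfaX, hRj, hRi, hfy] at h1
    rw [← EReal.coe_sub, ← EReal.coe_sub, EReal.coe_lt_coe_iff] at h1
    linarith

end FairDiv
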